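/- Let p be a prime, t ≥ 1 and m ≥ 1 integers, and let y ∈ (ZMod (p^t))ˣ. Then the sum over ALL Dirichlet characters χ modulo p^t of χ(y)⁻¹ times the m-th power of their Gauss sums equals φ(p^t) times a hyper-Kloosterman sum: Σ_{χ} χ(y)⁻¹·τ(χ)^m = φ(p^t) · Σ_{(x₁,…,x_m) ∈ ((ZMod (p^t))ˣ)^m, x₁·x₂⋯x_m = y} e_{p^t}(x₁ + x₂ + … + x_m), where φ is Euler's totient function. (This is the identity of Duke–Iwaniec expressing hyper-Kloosterman sums as sums of powers of GL(1) ε-factors.) -/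

import Mathlib

private lemma addChar_map_sum {A M : Type*} [AddCommMonoid A] [CommMonoid M]
    (ψ : AddChar A M) {ι : Type*} (s : Finset ι) (f : ι → A) :
    ψ (∑ i ∈ s, f i) = ∏ i ∈ s, ψ (f i) := by
  classical
  induction s using Finset.induction with
  | empty => simp
  | insert a s h ih => rw [Finset.sum_insert h, Finset.prod_insert h, AddChar.map_add_eq_mul, ih]

open Finset in
/-- Duke–Iwaniec identity: for `y` a unit mod `p^t`, the sum over all Dirichlet characters `χ`
mod `p^t` of `χ(y)⁻¹ τ(χ)^m` equals `φ(p^t)` times the `m`-dimensional hyper-Kloosterman sum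
at `y` mod `p^t`. -/
theorem sum_char_gauss_pow_eq_kloosterman (p : ℕ) [Fact p.Prime] (t : ℕ) (ht : 1 ≤ t)
    (m : ℕ) (hm : 1 ≤ m) (y : (ZMod (p ^ t))ˣ) :
    ∑ χ : DirichletCharacter ℂ (p ^ t),
        (χ (y : ZMod (p ^ t)))⁻¹ * (gaussSum χ ZMod.stdAddChar) ^ m =
      (Nat.totient (p ^ t) : ℂ) *
        ∑ x ∈ univ.filter (fun x : Fin m → (ZMod (p ^ t))ˣ => ∏ i, x i = y),
          ZMod.stdAddChar (∑ i, (x i : ZMod (p ^ t))) := by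
  classical
  have hy : IsUnit ((y : ZMod (p ^ t))) := y.isUnit
  have step1 : ∑ χ : DirichletCharacter ℂ (p ^ t),
      (χ (y : ZMod (p ^ t)))⁻¹ * (gaussSum χ ZMod.stdAddChar) ^ m =
      ∑ χ : DirichletCharacter ℂ (p ^ t), ∑ x : Fin m → ZMod (p ^ t),
        ZMod.stdAddChar (∑ i, x i) *
          (χ ((y : ZMod (p ^ t)))⁻¹ * χ (∏ i, x i)) := by
    refine Finset.sum_congr rfl fun χ _ => ?_
    rw [gaussSum, Fintype.sum_pow, Finset.mul_sum]
    refine Finset.sum_congr rfl fun x _ => ?_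
    rw [Finset.prod_mul_distrib, ← map_prod χ, ← addChar_map_sum]
    have hinv : (χ (y : ZMod (p ^ t)))⁻¹ = χ (((y : ZMod (p ^ t)))⁻¹) := by
      refine inv_eq_of_mul_eq_one_left ?_
      rw [← map_mul, ZMod.inv_mul_of_unit _ hy, map_one]
    rw [hinv]
    ring
  rw [step1, Finset.sum_comm]
  simp only [← Finset.mul_sum]
  have step2 : ∀ x : Fin m → ZMod (p ^ t),
      ∑ χ : DirichletCharacter ℂ (p ^ t), χ ((y : ZMod (p ^ t)))⁻¹ * χ (∏ i, x i) =
      if (y : ZMod (p ^ t)) = ∏ i, x i then (((p ^ t).totient : ℂ)) else 0 :=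
    fun x => DirichletCharacter.sum_char_inv_mul_char_eq ℂ hy _
  simp only [step2, mul_ite, mul_zero]
  rw [← Finset.sum_filter, Finset.mul_sum]
  have hunit : ∀ x : Fin m → ZMod (p ^ t),
      x ∈ univ.filter (fun x : Fin m → ZMod (p ^ t) => (y : ZMod (p ^ t)) = ∏ i, x i) →
      ∀ i, IsUnit (x i) := by
    intro x hx i
    rw [Finset.mem_filter] at hx
    exact isUnit_of_dvd_unit (Finset.dvd_prod_of_mem x (Finset.mem_univ i)) (hx.2 ▸ hy)
  refine Finset.sum_bij' (fun x hx => fun i => (hunit x hx i).unit)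
      (fun x _ => fun i => ((x i : ZMod (p ^ t)))) ?_ ?_ ?_ ?_ ?_
  · intro x hx
    rw [Finset.mem_filter]
    refine ⟨Finset.mem_univ _, ?_⟩
    apply Units.ext
    push_cast
    rw [Finset.mem_filter] at hx
    exact (Finset.prod_congr rfl fun i _ => IsUnit.unit_spec _).trans hx.2.symm
  · intro x hx
    rw [Finset.mem_filter] at hx ⊢
    refine ⟨Finset.mem_univ _, ?_⟩
    have h2 := congrArg (fun u : (ZMod (p ^ t))ˣ => (u : ZMod (p ^ t))) hx.2
    exact h2.symm.trans (map_prod (Units.coeHom (ZMod (p ^ t))) x Finset.univ)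
  · intro x hx
    funext i
    exact IsUnit.unit_spec _
  · intro x hx
    funext i
    exact Units.ext (IsUnit.unit_spec _)
  · intro x hx
    have h3 : (∑ i, (((hunit x hx i).unit : (ZMod (p ^ t))ˣ) : ZMod (p ^ t))) = ∑ i, x i :=
      Finset.sum_congr rfl fun i _ => IsUnit.unit_spec _
    rw [h3, mul_comm]
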